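/- Let A satisfy A² = 0, (A†)² = 0, A A† A = A, and let |ψ⟩ be a unit vector with A† |ψ⟩ = 0 and A† A |ψ⟩ = |ψ⟩. Then exp(θ(A − A†))|ψ⟩ = cos(θ)|ψ⟩ + sin(θ) A|ψ⟩. -/

import Mathlib

open NormedSpace ContinuousLinearMap

/-- On an 'excitable' state `ψ` (a unit vector with `A† ψ = 0` and `A† A ψ = ψ`), the UCC
factor acts as `exp (θ (A − A†)) ψ = cos θ · ψ + sin θ · A ψ`. -/
theorem exp_ucc_on_excitable_state {E : Type*} [NormedAddCommGroup E]
    [InnerProductSpace ℂ E] [FiniteDimensional ℂ E] [CompleteSpace E]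
    (A : E →L[ℂ] E) (h1 : A * A = 0) (h2 : adjoint A * adjoint A = 0)
    (h3 : A * adjoint A * A = A)
    (ψ : E) (hψ : ‖ψ‖ = 1) (hψ1 : adjoint A ψ = 0) (hψ2 : adjoint A (A ψ) = ψ) (θ : ℝ) :
    exp ((θ : ℂ) • (A - adjoint A)) ψ =
      (Real.cos θ : ℂ) • ψ + (Real.sin θ : ℂ) • A ψ := by
  set K : E →L[ℂ] E := A - adjoint A with hK
  have hAAψ : A (A ψ) = 0 := by
    have := congrArg (fun T : E →L[ℂ] E => T ψ) h1
    simpa [ContinuousLinearMap.mul_apply] using this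
  have hKψ : K ψ = A ψ := by simp [hK, hψ1]
  have hKAψ : K (A ψ) = -ψ := by simp [hK, hAAψ, hψ2]
  -- powers of K on ψ
  have hpow : ∀ m : ℕ, (K ^ (2 * m)) ψ = ((-1 : ℂ) ^ m) • ψ ∧
      (K ^ (2 * m + 1)) ψ = ((-1 : ℂ) ^ m) • A ψ := by
    intro m
    induction m with
    | zero => simpa using hKψ
    | succ m ih =>
      obtain ⟨he, ho⟩ := ih
      have h2m2 : 2 * (m + 1) = (2 * m + 1) + 1 := by ring
      have he' : (K ^ (2 * (m + 1))) ψ = ((-1 : ℂ) ^ (m + 1)) • ψ := by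
        rw [h2m2, pow_succ', ContinuousLinearMap.mul_apply, ho, map_smul, hKAψ]
        rw [pow_succ]
        module
      refine ⟨he', ?_⟩
      rw [pow_succ', ContinuousLinearMap.mul_apply, he', map_smul, hKψ]
  -- expand exp as a sum
  have hsumop : Summable fun n : ℕ => ((n.factorial : ℂ))⁻¹ • ((θ : ℂ) • K) ^ n :=
    expSeries_summable' ((θ : ℂ) • K)
  have hev : exp ((θ : ℂ) • K) ψ
      = ∑' n : ℕ, ((n.factorial : ℂ))⁻¹ • ((θ : ℂ) ^ n • (K ^ n) ψ) := by
    rw [exp_eq_tsum (𝕂 := ℂ)]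
    refine ((ContinuousLinearMap.apply ℂ E ψ).map_tsum hsumop).trans ?_
    refine tsum_congr fun n => ?_
    simp only [smul_pow, ContinuousLinearMap.smul_apply, ContinuousLinearMap.apply_apply]
  set g : ℕ → E := fun n => ((n.factorial : ℂ))⁻¹ • ((θ : ℂ) ^ n • (K ^ n) ψ) with hg
  have hsumg : Summable g := by
    have := hsumop.map (ContinuousLinearMap.apply ℂ E ψ).toLinearMap.toAddMonoidHom
      (ContinuousLinearMap.apply ℂ E ψ).continuous
    refine this.congr fun n => ?_
    simp only [hg, Function.comp, smul_pow, LinearMap.toAddMonoidHom_coe,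
      ContinuousLinearMap.coe_coe, ContinuousLinearMap.apply_apply,
      ContinuousLinearMap.smul_apply]
  have hcos := Complex.hasSum_cos (θ : ℂ)
  have hsin := Complex.hasSum_sin (θ : ℂ)
  have hgeven : ∀ m : ℕ, g (2 * m) = ((-1 : ℂ) ^ m * (θ : ℂ) ^ (2 * m) / ((2 * m).factorial : ℂ)) • ψ := by
    intro m
    rw [hg]
    simp only [(hpow m).1, smul_smul]
    congr 1
    ring
  have hgodd : ∀ m : ℕ, g (2 * m + 1)
      = ((-1 : ℂ) ^ m * (θ : ℂ) ^ (2 * m + 1) / ((2 * m + 1).factorial : ℂ)) • A ψ := by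
    intro m
    rw [hg]
    simp only [(hpow m).2, smul_smul]
    congr 1
    ring
  have hse : Summable fun m : ℕ => g (2 * m) :=
    hsumg.comp_injective fun a b hab => by omega
  have hso : Summable fun m : ℕ => g (2 * m + 1) :=
    hsumg.comp_injective fun a b hab => by omega
  have hsplit := tsum_even_add_odd hse hso
  have heven : ∑' m : ℕ, g (2 * m) = (Complex.cos θ) • ψ := by
    calc ∑' m : ℕ, g (2 * m)
        = ∑' m : ℕ, ((-1 : ℂ) ^ m * (θ : ℂ) ^ (2 * m) / ((2 * m).factorial : ℂ)) • ψ :=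
          tsum_congr hgeven
      _ = (∑' m : ℕ, (-1 : ℂ) ^ m * (θ : ℂ) ^ (2 * m) / ((2 * m).factorial : ℂ)) • ψ :=
          hcos.summable.tsum_smul_const ψ
      _ = (Complex.cos θ) • ψ := by rw [hcos.tsum_eq]
  have hodd : ∑' m : ℕ, g (2 * m + 1) = (Complex.sin θ) • A ψ := by
    calc ∑' m : ℕ, g (2 * m + 1)
        = ∑' m : ℕ, ((-1 : ℂ) ^ m * (θ : ℂ) ^ (2 * m + 1) / ((2 * m + 1).factorial : ℂ)) • A ψ :=
          tsum_congr hgodd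
      _ = (∑' m : ℕ, (-1 : ℂ) ^ m * (θ : ℂ) ^ (2 * m + 1) / ((2 * m + 1).factorial : ℂ)) • A ψ :=
          hsin.summable.tsum_smul_const (A ψ)
      _ = (Complex.sin θ) • A ψ := by rw [hsin.tsum_eq]
  rw [hev, ← hsplit, heven, hodd, ← Complex.ofReal_cos, ← Complex.ofReal_sin]
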